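/- Let L ≥ 0, let u : [0,∞) → ℝ, fix t > 0 and μ ∈ (0, t], and define Q(t, T, σ) = u(t − σ) − u(t) + ((u(t) − u(t − T))/T)·σ. Suppose |Q(t, T, σ)| ≤ L·σ·(T − σ)/2 holds for all T ∈ (0, μ] and all σ ∈ [0, T], and let β = lim as T → 0⁺ of (u(t) − u(t − T))/T (which exists under these hypotheses). Then |u(t − σ) + β·σ − u(t)| ≤ L·σ²/2 holds for all σ ∈ [0, μ]. -/

import Mathlib

open Set Filter Topology

/-- `f ∈ F_L`: `f : [0,∞) → ℝ` is differentiable with derivative `f'`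
that is Lipschitz continuous with constant `L` on `[0,∞)`. -/
def IsFL (L : ℝ) (f f' : ℝ → ℝ) : Prop :=
  (∀ t ∈ Set.Ici (0:ℝ), HasDerivWithinAt f (f' t) (Set.Ici 0) t) ∧
  ∀ s ∈ Set.Ici (0:ℝ), ∀ t ∈ Set.Ici (0:ℝ), |f' s - f' t| ≤ L * |s - t|

/-- `η ∈ E_N`: measurable noise bounded by `N` on `[0,∞)`. -/
def IsEN (N : ℝ) (η : ℝ → ℝ) : Prop :=
  Measurable η ∧ ∀ t ∈ Set.Ici (0:ℝ), |η t| ≤ N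

/-- `f ∈ F_L^R`: member of `F_L` with `|f(0)| ≤ R` and `|ḟ(0)| ≤ R`. -/
def IsFLR (L R : ℝ) (f f' : ℝ → ℝ) : Prop :=
  IsFL L f f' ∧ |f 0| ≤ R ∧ |f' 0| ≤ R

/-- A differentiator is causal if its output at time `T` depends only on the
input on `[0, T]`. -/
def Causal (D : (ℝ → ℝ) → ℝ → ℝ) : Prop :=
  ∀ u₁ u₂ T, (∀ t ∈ Set.Icc (0:ℝ) T, u₁ t = u₂ t) → D u₁ T = D u₂ T

theorem stmt13 (L : ℝ) (hL : 0 ≤ L) (u : ℝ → ℝ) (t : ℝ) (ht : 0 < t)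
    (Q : ℝ → ℝ → ℝ)
    (hQ : ∀ T σ : ℝ, Q T σ = u (t - σ) - u t + ((u t - u (t - T)) / T) * σ)
    (μ : ℝ) (hμ : μ ∈ Set.Ioc (0:ℝ) t)
    (hbound : ∀ T : ℝ, 0 < T → T ≤ μ → ∀ σ ∈ Set.Icc (0:ℝ) T,
      |Q T σ| ≤ L * σ * (T - σ) / 2)
    (β : ℝ)
    (hβ : Filter.Tendsto (fun T => (u t - u (t - T)) / T) (𝓝[>] 0) (𝓝 β)) :
    ∀ σ ∈ Set.Icc (0:ℝ) μ, |u (t - σ) + β * σ - u t| ≤ L * σ ^ 2 / 2 := by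
  intro σ hσ
  obtain ⟨hσ0, hσμ⟩ := hσ
  rcases eq_or_lt_of_le hσ0 with h0 | h0
  · simp [← h0]
  set D : ℝ → ℝ := fun T => (u t - u (t - T)) / T with hD
  -- key: |D σ - β| ≤ L * σ / 2
  have key : |D σ - β| ≤ L * σ / 2 := by
    have h1 : Tendsto (fun s => |D σ - D s|) (𝓝[>] (0:ℝ)) (𝓝 |D σ - β|) :=
      ((tendsto_const_nhds.sub hβ).abs)
    have h2 : Tendsto (fun s : ℝ => L * (σ - s) / 2) (𝓝[>] (0:ℝ)) (𝓝 (L * σ / 2)) := by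
      have : Tendsto (fun s : ℝ => L * (σ - s) / 2) (𝓝 (0:ℝ)) (𝓝 (L * (σ - 0) / 2)) := by
        exact (((tendsto_const_nhds.sub tendsto_id).const_mul L).div_const 2)
      simpa using this.mono_left nhdsWithin_le_nhds
    refine le_of_tendsto_of_tendsto h1 h2 ?_
    filter_upwards [Ioc_mem_nhdsGT_of_mem (by exact ⟨le_refl 0, h0⟩ : (0:ℝ) ∈ Set.Ico 0 σ)]
      with s hs
    obtain ⟨hs0, hsσ⟩ := hs
    have hb := hbound σ h0 hσμ s ⟨le_of_lt hs0, hsσ⟩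
    rw [hQ] at hb
    have hque : u (t - s) - u t + (u t - u (t - σ)) / σ * s = s * (D σ - D s) := by
      simp only [hD]
      field_simp
      ring
    rw [hque, abs_mul, abs_of_pos hs0] at hb
    calc |D σ - D s| = s * |D σ - D s| / s := by field_simp
      _ ≤ (L * s * (σ - s) / 2) / s := by
          gcongr
      _ = L * (σ - s) / 2 := by field_simp
  have hexpr : u (t - σ) + β * σ - u t = σ * (β - D σ) := by
    simp only [hD]
    field_simp
    ring
  rw [hexpr, abs_mul, abs_of_pos h0, abs_sub_comm]
  calc σ * |D σ - β| ≤ σ * (L * σ / 2) := by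
        exact mul_le_mul_of_nonneg_left key (le_of_lt h0)
    _ = L * σ ^ 2 / 2 := by ring
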